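/- Let S be a finite nonempty type, K : S → PMF S a Markov transition kernel, and A ⊆ S a set such that for every state s ∈ S there exists n_s ∈ ℕ with P_{n_s}(s)(A) > 0, where P_n(s) is the time-n distribution of the chain started at s. If A is absorbing (K(a)(A) = 1 for all a ∈ A), then there exist N ∈ ℕ and ε > 0 such that P_N(s)(A) ≥ ε for every s ∈ S. -/
import Mathlib


/-- The time-`n` distribution of the Markov chain with transition kernel `K`
started at `s`: `P 0 s` is the point mass at `s` and `P (n+1) s = (P n s).bind K`. -/
noncomputable def chainDist {S : Type*} (K : S → PMF S) : ℕ → S → PMF S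
  | 0, s => PMF.pure s
  | n + 1, s => (chainDist K n s).bind K

lemma chainDist_mono_step {S : Type*} (K : S → PMF S) (A : Set S)
    (hA : ∀ a ∈ A, (K a).toOuterMeasure A = 1) (n : ℕ) (s : S) :
    (chainDist K n s).toOuterMeasure A ≤ (chainDist K (n+1) s).toOuterMeasure A := by
  show _ ≤ ((chainDist K n s).bind K).toOuterMeasure A
  rw [PMF.toOuterMeasure_bind_apply, PMF.toOuterMeasure_apply]
  refine ENNReal.tsum_le_tsum fun a => ?_
  by_cases ha : a ∈ A
  · rw [Set.indicator_of_mem ha, hA a ha, mul_one]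
  · simp [Set.indicator_of_notMem ha]

lemma chainDist_mono {S : Type*} (K : S → PMF S) (A : Set S)
    (hA : ∀ a ∈ A, (K a).toOuterMeasure A = 1) (s : S) :
    Monotone fun n => (chainDist K n s).toOuterMeasure A :=
  monotone_nat_of_le_succ fun n => chainDist_mono_step K A hA n s

/-- Uniform accessibility of an absorbing set: if from every state `s` of the
finite space the chain reaches `A` with positive probability at some finite time,
and `A` is absorbing, then there is a single horizon `N` and a uniform lower bound
`ε > 0` with `P_N(s)(A) ≥ ε` for every starting state `s`. -/
theorem absorbing_uniform_accessible {S : Type*} [Fintype S] [Nonempty S]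
    (K : S → PMF S) (A : Set S)
    (hacc : ∀ s : S, ∃ n : ℕ, 0 < (chainDist K n s).toOuterMeasure A)
    (hA : ∀ a ∈ A, (K a).toOuterMeasure A = 1) :
    ∃ (N : ℕ) (ε : ENNReal), 0 < ε ∧
      ∀ s : S, ε ≤ (chainDist K N s).toOuterMeasure A := by
  choose f hf using hacc
  set N := Finset.univ.sup f with hN
  have hpos : ∀ s : S, 0 < (chainDist K N s).toOuterMeasure A := fun s =>
    lt_of_lt_of_le (hf s)
      (chainDist_mono K A hA s (Finset.le_sup (Finset.mem_univ s)))
  refine ⟨N, Finset.univ.inf' Finset.univ_nonempty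
      (fun s => (chainDist K N s).toOuterMeasure A), ?_, ?_⟩
  · rw [Finset.lt_inf'_iff]
    exact fun s _ => hpos s
  · exact fun s => Finset.inf'_le _ (Finset.mem_univ s)
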